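/- Let n ≥ 1, a ∈ ℝⁿ, d ∈ ℝ, and let S = {(x,y) ∈ [0,1]ⁿ × [0,1]ⁿ : ∑_{i=1}^n a_i x_i y_i ≥ d}. Let (I, J₀, J₁) be a partition of [n] with I ≠ ∅ such that {a_i : i ∈ I} forms a minimal cover of d^Λ := d − ∑_{i∈J₁} a_i, and assume a_i ≠ 0 for every i ∉ I. Set Δ := ∑_{i∈I} a_i − d^Λ, d_i := a_i − Δ for i ∈ I, and I^> := {i ∈ I : a_i > Δ}. Let l_− := 1/Δ; if I^> ≠ ∅, pick i₀ ∈ I^> with a_{i₀} = min{a_i : i ∈ I^>}, set d_{i₀} := a_{i₀} − Δ and l_+ := (√a_{i₀} + √d_{i₀})/(Δ √d_{i₀}); otherwise set l_+ := 1/Δ. For i ∉ I define γ_i : ℝ² → ℝ by: (i) γ_i(x,y) = l_+ a_i min{x,y} if i ∈ J₀ and a_i > 0; (ii) γ_i(x,y) = −l_+ a_i min{2 − x − y, 1} if i ∈ J₁ and a_i < 0; (iii) γ_i(x,y) = min{ l_− a_i (x + y − 1), l_+ a_i (x + y − 1) + l_+ Δ − 1, 0 } if i ∈ J₀ and a_i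 < 0; (iv) if i ∈ J₁ and a_i > 0, let g̃_i(x,y) = l_+ a_i (min{x,y} − 1) + l_+ Δ − 1, h̃_i(x,y) = l_− a_i (min{x,y} − 1), g_i(x,y) = √(a_i − Δ) √a_i l_+ √(xy) − l_+ (a_i − Δ) − 1, h_i(x,y) = (√a_i/(√a_i − √(a_i − Δ)))(√(xy) − 1), and set γ_i(x,y) = min{g̃_i(x,y), h̃_i(x,y), g_i(x,y), h_i(x,y)} when I^> ≠ ∅ and a_i ≥ a_{i₀}, and γ_i(x,y) = min{g̃_i(x,y), h̃_i(x,y)} otherwise. Then for every (x,y) ∈ S the lifted bilinear cover inequality holds: ∑_{i∈I} (√a_i/(√a_i − √d_i))(√(x_i y_i) − 1) + ∑_{i∉I} γ_i(x_i, y_i) ≥ −1. -/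
import Mathlib

open Real

lemma cval {a Δ : ℝ} (hΔ : 0 < Δ) (ha : Δ ≤ a) :
    Real.sqrt a / (Real.sqrt a - Real.sqrt (a - Δ)) = (a + Real.sqrt a * Real.sqrt (a - Δ)) / Δ := by
  have h0 : (0:ℝ) ≤ a - Δ := by linarith
  have h1 : Real.sqrt (a-Δ) < Real.sqrt a := Real.sqrt_lt_sqrt h0 (by linarith)
  have h2 : (Real.sqrt a)^2 = a := Real.sq_sqrt (by linarith)
  have h3 : (Real.sqrt (a-Δ))^2 = a - Δ := Real.sq_sqrt h0
  rw [div_eq_div_iff (by linarith) (ne_of_gt hΔ)]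
  linear_combination (-(Real.sqrt (a-Δ))) * h2 + (Real.sqrt a) * h3

lemma sqrt_le_one' {t : ℝ} (ht1 : t ≤ 1) : Real.sqrt t ≤ 1 := by
  rw [show (1:ℝ) = Real.sqrt 1 by simp]
  exact Real.sqrt_le_sqrt ht1

lemma lin_low (C w t : ℝ) (ht0 : 0 ≤ t) (ht1 : t ≤ 1) (hw : 0 ≤ w) (hCw : C ≤ w) :
    w * (t - 1) ≤ C * (Real.sqrt t - 1) := by
  have hst0 : 0 ≤ Real.sqrt t := Real.sqrt_nonneg t
  have hst1 : Real.sqrt t ≤ 1 := sqrt_le_one' ht1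
  have hst2 : (Real.sqrt t)^2 = t := Real.sq_sqrt ht0
  nlinarith [mul_nonneg (sub_nonneg.2 hst1) (show (0:ℝ) ≤ w*(1+Real.sqrt t) - C by nlinarith [mul_nonneg hw hst0])]

lemma chord {a Δ t : ℝ} (hΔ : 0 < Δ) (ha : Δ ≤ a) (hlow : a - Δ ≤ a*t) (ht0 : 0 ≤ t) (ht1 : t ≤ 1) :
    (a*t - a)/Δ ≤ Real.sqrt a/(Real.sqrt a - Real.sqrt (a-Δ)) * (Real.sqrt t - 1) := by
  have h0 : (0:ℝ) ≤ a - Δ := by linarith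
  have ha0 : (0:ℝ) ≤ a := by linarith
  have hst0 : 0 ≤ Real.sqrt t := Real.sqrt_nonneg t
  have hst1 : Real.sqrt t ≤ 1 := sqrt_le_one' ht1
  have hst2 : (Real.sqrt t)^2 = t := Real.sq_sqrt ht0
  have hsa2 : (Real.sqrt a)^2 = a := Real.sq_sqrt ha0
  have hsd2 : (Real.sqrt (a-Δ))^2 = a - Δ := Real.sq_sqrt h0
  have hsa0 : 0 ≤ Real.sqrt a := Real.sqrt_nonneg a
  have hkey : Real.sqrt (a-Δ) ≤ Real.sqrt a * Real.sqrt t := by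
    rw [← Real.sqrt_mul ha0]
    exact Real.sqrt_le_sqrt hlow
  rw [cval hΔ ha]
  rw [div_mul_eq_mul_div, div_le_div_iff₀ hΔ hΔ]
  have hd : a*t - a ≤ (a + Real.sqrt a * Real.sqrt (a-Δ)) * (Real.sqrt t - 1) := by
    nlinarith [mul_nonneg (mul_nonneg hsa0 (sub_nonneg.2 hkey)) (sub_nonneg.2 hst1)]
  nlinarith [hd, hΔ]

lemma low_bound {a Δ t lp : ℝ} (hΔ : 0 < Δ) (ha : Δ ≤ a) (ht0 : 0 ≤ t)
    (hlow : a*t ≤ a - Δ)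
    (hlp2 : Δ < a → Real.sqrt a + Real.sqrt (a-Δ) ≤ lp*Δ*Real.sqrt (a-Δ)) :
    lp*a*(t-1) + (lp*Δ - 1) ≤ Real.sqrt a/(Real.sqrt a - Real.sqrt (a-Δ)) * (Real.sqrt t - 1) := by
  rcases eq_or_lt_of_le ha with heq | hlt
  · have ht : t = 0 := by
      have hapos : 0 < a := by linarith
      nlinarith [mul_nonneg hapos.le ht0]
    subst ht
    rw [← heq]
    simp only [sub_self, Real.sqrt_zero, sub_zero]
    have hΔs : Real.sqrt Δ ≠ 0 := by positivity
    rw [div_self hΔs]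
    nlinarith
  · have h0 : (0:ℝ) ≤ a - Δ := by linarith
    have ha0 : (0:ℝ) ≤ a := by linarith
    have hst0 : 0 ≤ Real.sqrt t := Real.sqrt_nonneg t
    have hst2 : (Real.sqrt t)^2 = t := Real.sq_sqrt ht0
    have hsa2 : (Real.sqrt a)^2 = a := Real.sq_sqrt ha0
    have hsd2 : (Real.sqrt (a-Δ))^2 = a - Δ := Real.sq_sqrt h0
    have hsa0 : 0 ≤ Real.sqrt a := Real.sqrt_nonneg a
    have hsd0 : 0 ≤ Real.sqrt (a-Δ) := Real.sqrt_nonneg _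
    have hsapos : 0 < Real.sqrt a := Real.sqrt_pos.2 (by linarith)
    have hsdpos : 0 < Real.sqrt (a-Δ) := Real.sqrt_pos.2 (by linarith)
    have hkey : Real.sqrt a * Real.sqrt t ≤ Real.sqrt (a-Δ) := by
      rw [← Real.sqrt_mul ha0]
      exact Real.sqrt_le_sqrt hlow
    have hlp2' := hlp2 hlt
    have hlp0 : 0 ≤ lp := by nlinarith [mul_pos hΔ hsdpos, hsapos, hsdpos]
    have hf2 : 0 ≤ Δ*lp*a*(Real.sqrt t) + Δ*lp*(Real.sqrt a)*(Real.sqrt (a-Δ)) - a - Real.sqrt a * Real.sqrt (a-Δ) := by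
      have h5 := mul_le_mul_of_nonneg_left hlp2' hsa0
      nlinarith [mul_nonneg (mul_nonneg (mul_nonneg hΔ.le hlp0) ha0) hst0]
    rw [cval hΔ ha]
    rw [div_mul_eq_mul_div, le_div_iff₀ hΔ]
    have hid : Real.sqrt a * ((a + Real.sqrt a * Real.sqrt (a-Δ)) * (Real.sqrt t - 1)
          - (lp*a*(t-1) + (lp*Δ - 1))*Δ)
        = (Real.sqrt (a-Δ) - Real.sqrt a * Real.sqrt t)
          * (Δ*lp*a*(Real.sqrt t) + Δ*lp*(Real.sqrt a)*(Real.sqrt (a-Δ)) - a - Real.sqrt a * Real.sqrt (a-Δ)) := by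
      linear_combination (Δ*lp*(Real.sqrt (a-Δ))*(Real.sqrt t) - Real.sqrt (a-Δ)) * hsa2
        + (Real.sqrt a - Δ*lp*(Real.sqrt a)) * hsd2 + (Δ*lp*a*(Real.sqrt a)) * hst2
    nlinarith [mul_nonneg (sub_nonneg.2 hkey) hf2, hid, hsapos]

lemma g_low {a Δ t lp : ℝ} (hΔ : 0 < Δ) (ha : Δ ≤ a) (ht0 : 0 ≤ t)
    (hlow : a*t ≤ a - Δ) (hlp0 : 0 ≤ lp) :
    lp*a*(t-1) + (lp*Δ - 1) ≤ Real.sqrt (a-Δ) * Real.sqrt a * lp * Real.sqrt t - lp*(a-Δ) - 1 := by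
  have h0 : (0:ℝ) ≤ a - Δ := by linarith
  have ha0 : (0:ℝ) ≤ a := by linarith
  have hst0 : 0 ≤ Real.sqrt t := Real.sqrt_nonneg t
  have hst2 : (Real.sqrt t)^2 = t := Real.sq_sqrt ht0
  have hsa2 : (Real.sqrt a)^2 = a := Real.sq_sqrt ha0
  have hkey : Real.sqrt a * Real.sqrt t ≤ Real.sqrt (a-Δ) := by
    rw [← Real.sqrt_mul ha0]
    exact Real.sqrt_le_sqrt hlow
  have hid : (Real.sqrt (a-Δ) * Real.sqrt a * lp * Real.sqrt t - lp*(a-Δ) - 1)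
      - (lp*a*(t-1) + (lp*Δ - 1))
      = lp*(Real.sqrt a * Real.sqrt t)*(Real.sqrt (a-Δ) - Real.sqrt a * Real.sqrt t) := by
    linear_combination (lp*(Real.sqrt t)^2)*hsa2 + (lp*a)*hst2
  nlinarith [mul_nonneg (mul_nonneg hlp0 (mul_nonneg (Real.sqrt_nonneg a) hst0))
      (sub_nonneg.2 hkey), hid]

lemma g_high {a Δ t lp : ℝ} (hΔ : 0 < Δ) (hlt : Δ < a) (ht1 : t ≤ 1)
    (hhigh : a - Δ ≤ a*t) (ht0 : 0 ≤ t)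
    (hlp2 : Real.sqrt a + Real.sqrt (a-Δ) ≤ lp*Δ*Real.sqrt (a-Δ)) :
    (a*t - a)/Δ ≤ Real.sqrt (a-Δ) * Real.sqrt a * lp * Real.sqrt t - lp*(a-Δ) - 1 := by
  have h0 : (0:ℝ) ≤ a - Δ := by linarith
  have ha0 : (0:ℝ) ≤ a := by linarith
  have hst0 : 0 ≤ Real.sqrt t := Real.sqrt_nonneg t
  have hst1 : Real.sqrt t ≤ 1 := by
    rw [show (1:ℝ) = Real.sqrt 1 by simp]
    exact Real.sqrt_le_sqrt ht1
  have hst2 : (Real.sqrt t)^2 = t := Real.sq_sqrt ht0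
  have hsa2 : (Real.sqrt a)^2 = a := Real.sq_sqrt ha0
  have hsd2 : (Real.sqrt (a-Δ))^2 = a - Δ := Real.sq_sqrt h0
  have hsa0 : 0 ≤ Real.sqrt a := Real.sqrt_nonneg a
  have hsd0 : 0 ≤ Real.sqrt (a-Δ) := Real.sqrt_nonneg _
  have hsapos : 0 < Real.sqrt a := Real.sqrt_pos.2 (by linarith)
  have hkey : Real.sqrt (a-Δ) ≤ Real.sqrt a * Real.sqrt t := by
    rw [← Real.sqrt_mul ha0]
    exact Real.sqrt_le_sqrt hhigh
  have hf2 : a * Real.sqrt t ≤ Real.sqrt a * Real.sqrt (a-Δ) * (Δ*lp - 1) := by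
    have h5 := mul_le_mul_of_nonneg_left hlp2 hsa0
    nlinarith [mul_le_mul_of_nonneg_left hst1 ha0]
  rw [div_le_iff₀ hΔ]
  have hid : Real.sqrt a * ((Real.sqrt (a-Δ) * Real.sqrt a * lp * Real.sqrt t - lp*(a-Δ) - 1)*Δ - (a*t - a))
      = (Real.sqrt a * Real.sqrt t - Real.sqrt (a-Δ))
        * (Real.sqrt a * Real.sqrt (a-Δ) * (Δ*lp - 1) - a * Real.sqrt t) := by
    linear_combination (Real.sqrt (a-Δ) * Real.sqrt t) * hsa2
      + (Δ*lp*(Real.sqrt a) - Real.sqrt a) * hsd2 + (a*(Real.sqrt a)) * hst2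
  nlinarith [mul_nonneg (sub_nonneg.2 hkey) (sub_nonneg.2 hf2), hid, hsapos]

noncomputable def stmt7psi (lm lp c z : ℝ) : ℝ :=
  if 0 ≤ z then lp*z else min (lm*z) (lp*z + c)

lemma stmt7psi_cases (lm lp c z : ℝ) :
    stmt7psi lm lp c z = lp*z ∨ stmt7psi lm lp c z = lm*z ∨ stmt7psi lm lp c z = lp*z + c := by
  unfold stmt7psi
  split_ifs with h
  · exact Or.inl rfl
  · rcases min_cases (lm*z) (lp*z + c) with ⟨h1, _⟩ | ⟨h1, _⟩
    · exact Or.inr (Or.inl h1)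
    · exact Or.inr (Or.inr h1)

lemma stmt7psi_le_lm {lm lp c z : ℝ} (hz : z ≤ 0) : stmt7psi lm lp c z ≤ lm*z := by
  unfold stmt7psi
  split_ifs with h
  · have : z = 0 := le_antisymm hz h
    simp [this]
  · exact min_le_left _ _

lemma stmt7psi_le_lp {lm lp c z : ℝ} (hc : 0 ≤ c) : stmt7psi lm lp c z ≤ lp*z + c := by
  unfold stmt7psi
  split_ifs with h
  · linarith
  · exact min_le_right _ _

lemma stmt7psi_ge_lp {lm lp c z : ℝ} (hlmlp : lm ≤ lp) (hc : 0 ≤ c) (hz : z ≤ 0) :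
    lp*z ≤ stmt7psi lm lp c z := by
  unfold stmt7psi
  split_ifs with h
  · exact le_refl _
  · exact le_min (by nlinarith) (by linarith)

lemma stmt7psi_mono {lm lp c : ℝ} (hlm : 0 < lm) (hlmlp : lm ≤ lp) (hc : 0 ≤ c) :
    Monotone (stmt7psi lm lp c) := by
  intro u v huv
  unfold stmt7psi
  split_ifs with h1 h2 h2
  · nlinarith
  · linarith
  · calc min (lm*u) (lp*u + c) ≤ lm*u := min_le_left _ _
      _ ≤ 0 := by nlinarith
      _ ≤ lp*v := by nlinarith
  · push_neg at h1 h2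
    apply le_min
    · exact le_trans (min_le_left _ _) (by nlinarith)
    · exact le_trans (min_le_right _ _) (by nlinarith)

lemma stmt7psi_superadd {lm lp c : ℝ} (hlm : 0 < lm) (hlmlp : lm ≤ lp) (hc : 0 ≤ c)
    (u v : ℝ) : stmt7psi lm lp c (u+v) ≤ stmt7psi lm lp c u + stmt7psi lm lp c v := by
  rcases le_or_gt 0 (u+v) with h | h
  · -- psi (u+v) = lp (u+v) ≤ psi u + psi v  since psi z ≥ lp z whenever... careful: need per-sign
    have huv : stmt7psi lm lp c (u+v) = lp*(u+v) := by unfold stmt7psi; rw [if_pos h]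
    rw [huv]
    have hu : lp*u ≤ stmt7psi lm lp c u := by
      rcases le_or_gt 0 u with hu0 | hu0
      · unfold stmt7psi; rw [if_pos hu0]
      · exact stmt7psi_ge_lp hlmlp hc hu0.le
    have hv : lp*v ≤ stmt7psi lm lp c v := by
      rcases le_or_gt 0 v with hv0 | hv0
      · unfold stmt7psi; rw [if_pos hv0]
      · exact stmt7psi_ge_lp hlmlp hc hv0.le
    linarith
  · have huv : stmt7psi lm lp c (u+v) = min (lm*(u+v)) (lp*(u+v) + c) := by
      unfold stmt7psi; rw [if_neg (not_le.2 h)]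
    rw [huv]
    rcases le_or_gt 0 u with hu0 | hu0
    · -- u ≥ 0, v < 0
      have hv0 : v < 0 := by linarith
      have hpu : stmt7psi lm lp c u = lp*u := by unfold stmt7psi; rw [if_pos hu0]
      have hpv : stmt7psi lm lp c v = min (lm*v) (lp*v + c) := by
        unfold stmt7psi; rw [if_neg (not_le.2 hv0)]
      rw [hpu, hpv]
      rcases min_cases (lm*v) (lp*v + c) with ⟨h1, _⟩ | ⟨h1, _⟩ <;> rw [h1]
      · exact le_trans (min_le_left _ _) (by nlinarith)
      · exact le_trans (min_le_right _ _) (by nlinarith)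
    · rcases le_or_gt 0 v with hv0 | hv0
      · have hpv : stmt7psi lm lp c v = lp*v := by unfold stmt7psi; rw [if_pos hv0]
        have hpu : stmt7psi lm lp c u = min (lm*u) (lp*u + c) := by
          unfold stmt7psi; rw [if_neg (not_le.2 hu0)]
        rw [hpu, hpv]
        rcases min_cases (lm*u) (lp*u + c) with ⟨h1, _⟩ | ⟨h1, _⟩ <;> rw [h1]
        · exact le_trans (min_le_left _ _) (by nlinarith)
        · exact le_trans (min_le_right _ _) (by nlinarith)
      · have hpu : stmt7psi lm lp c u = min (lm*u) (lp*u + c) := by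
          unfold stmt7psi; rw [if_neg (not_le.2 hu0)]
        have hpv : stmt7psi lm lp c v = min (lm*v) (lp*v + c) := by
          unfold stmt7psi; rw [if_neg (not_le.2 hv0)]
        rw [hpu, hpv]
        rcases min_cases (lm*u) (lp*u + c) with ⟨h1, _⟩ | ⟨h1, _⟩ <;>
          rcases min_cases (lm*v) (lp*v + c) with ⟨h2, _⟩ | ⟨h2, _⟩ <;> rw [h1, h2]
        · exact le_trans (min_le_left _ _) (by nlinarith)
        · exact le_trans (min_le_right _ _) (by nlinarith)
        · exact le_trans (min_le_right _ _) (by nlinarith)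
        · exact le_trans (min_le_right _ _) (by nlinarith)

lemma stmt7psi_sum {lm lp c : ℝ} (hlm : 0 < lm) (hlmlp : lm ≤ lp) (hc : 0 ≤ c)
    {ι : Type*} (s : Finset ι) (f : ι → ℝ) :
    stmt7psi lm lp c (∑ i ∈ s, f i) ≤ ∑ i ∈ s, stmt7psi lm lp c (f i) := by
  classical
  induction s using Finset.cons_induction with
  | empty => simp [stmt7psi]
  | cons i s hi ih =>
    rw [Finset.sum_cons, Finset.sum_cons]
    exact le_trans (stmt7psi_superadd hlm hlmlp hc _ _) (by linarith)

lemma stmt7psi_of_nonneg {lm lp c z : ℝ} (h : 0 ≤ z) : stmt7psi lm lp c z = lp*z := by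
  unfold stmt7psi; rw [if_pos h]

lemma stmt7psi_of_neg {lm lp c z : ℝ} (h : ¬ 0 ≤ z) :
    stmt7psi lm lp c z = min (lm*z) (lp*z + c) := by
  unfold stmt7psi; rw [if_neg h]

lemma stmt7psi_min_le {lm lp c z : ℝ} (hlmlp : lm ≤ lp) :
    min (lm*z) (lp*z + c) ≤ stmt7psi lm lp c z := by
  unfold stmt7psi
  split_ifs with h
  · exact min_le_of_left_le (by nlinarith)
  · exact le_refl _

set_option maxHeartbeats 1000000 in

/-- validity of the lifted bilinear cover inequality.  Given a minimal
cover yielding partition (I, J₀, J₁) of [n] (with a_i ≠ 0 for i ∉ I), the lifting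
coefficients l₋, l₊ and lifting functions γ_i as in the paper, every (x,y) ∈ S
satisfies ∑_{i∈I} (√a_i/(√a_i − √d_i))(√(x_i y_i) − 1) + ∑_{i∉I} γ_i(x_i,y_i) ≥ −1. -/
theorem stmt_7 (n : ℕ) (hn : 1 ≤ n) (a : Fin n → ℝ) (d : ℝ)
    (I J0 J1 : Finset (Fin n)) (hIne : I.Nonempty)
    (hIJ0 : Disjoint I J0) (hIJ1 : Disjoint I J1) (hJ0J1 : Disjoint J0 J1)
    (hpart : I ∪ J0 ∪ J1 = Finset.univ)
    (dΛ : ℝ) (hdΛ : dΛ = d - ∑ i ∈ J1, a i)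
    -- {a_i : i ∈ I} forms a minimal cover of dΛ
    (hpos : ∀ i ∈ I, 0 < a i) (hdpos : 0 < dΛ) (hsum : dΛ < ∑ i ∈ I, a i)
    (hmin : ∀ K : Finset (Fin n), K ⊂ I → ∑ i ∈ K, a i ≤ dΛ)
    (hanz : ∀ i ∉ I, a i ≠ 0)
    (Δ : ℝ) (hΔ : Δ = (∑ i ∈ I, a i) - dΛ)
    -- i₀ is a minimizer of a over I^> = {i ∈ I : a_i > Δ}, whenever I^> ≠ ∅
    (i₀ : Fin n)
    (hi₀ : (∃ i ∈ I, Δ < a i) →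
      (i₀ ∈ I ∧ Δ < a i₀ ∧ ∀ i ∈ I, Δ < a i → a i₀ ≤ a i))
    (lminus lplus : ℝ)
    (hlminus : lminus = 1 / Δ)
    (hlplus₁ : (∃ i ∈ I, Δ < a i) →
      lplus = (Real.sqrt (a i₀) + Real.sqrt (a i₀ - Δ)) / (Δ * Real.sqrt (a i₀ - Δ)))
    (hlplus₂ : ¬ (∃ i ∈ I, Δ < a i) → lplus = 1 / Δ)
    (γ : Fin n → ℝ → ℝ → ℝ)
    -- (i) i ∈ J₀, a_i > 0
    (hγ₁ : ∀ i ∈ J0, 0 < a i → ∀ x y : ℝ,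
      γ i x y = lplus * a i * min x y)
    -- (ii) i ∈ J₁, a_i < 0
    (hγ₂ : ∀ i ∈ J1, a i < 0 → ∀ x y : ℝ,
      γ i x y = -(lplus * a i * min (2 - x - y) 1))
    -- (iii) i ∈ J₀, a_i < 0
    (hγ₃ : ∀ i ∈ J0, a i < 0 → ∀ x y : ℝ,
      γ i x y = min (min (lminus * a i * (x + y - 1))
                         (lplus * a i * (x + y - 1) + lplus * Δ - 1)) 0)
    -- (iv) i ∈ J₁, a_i > 0, case I^> ≠ ∅ and a_i ≥ a_{i₀}
    (hγ₄ : ∀ i ∈ J1, 0 < a i → (∃ j ∈ I, Δ < a j) → a i₀ ≤ a i → ∀ x y : ℝ,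
      γ i x y = min
        (min (lplus * a i * (min x y - 1) + lplus * Δ - 1)
             (lminus * a i * (min x y - 1)))
        (min (Real.sqrt (a i - Δ) * Real.sqrt (a i) * lplus * Real.sqrt (x * y)
                - lplus * (a i - Δ) - 1)
             (Real.sqrt (a i) / (Real.sqrt (a i) - Real.sqrt (a i - Δ))
                * (Real.sqrt (x * y) - 1))))
    -- (iv) i ∈ J₁, a_i > 0, all other cases
    (hγ₅ : ∀ i ∈ J1, 0 < a i → (¬ (∃ j ∈ I, Δ < a j) ∨ a i < a i₀) → ∀ x y : ℝ,
      γ i x y = min (lplus * a i * (min x y - 1) + lplus * Δ - 1)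
                    (lminus * a i * (min x y - 1)))
    -- (x, y) ∈ S
    (x y : Fin n → ℝ)
    (hx : ∀ i, x i ∈ Set.Icc (0 : ℝ) 1) (hy : ∀ i, y i ∈ Set.Icc (0 : ℝ) 1)
    (hxy : d ≤ ∑ i, a i * (x i * y i)) :
    -1 ≤ (∑ i ∈ I, Real.sqrt (a i) / (Real.sqrt (a i) - Real.sqrt (a i - Δ))
            * (Real.sqrt (x i * y i) - 1))
         + ∑ i ∈ Iᶜ, γ i (x i) (y i) := by
  classical
  have hΔpos : 0 < Δ := by rw [hΔ]; linarith
  have hIle : ∀ i ∈ I, Δ ≤ a i := by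
    intro i hi
    have h1 := hmin _ (Finset.erase_ssubset hi)
    rw [Finset.sum_erase_eq_sub hi] at h1
    rw [hΔ]; linarith
  have ht0 : ∀ i, 0 ≤ x i * y i := fun i => mul_nonneg (hx i).1 (hy i).1
  have ht1 : ∀ i, x i * y i ≤ 1 := fun i => mul_le_one₀ (hx i).2 (hy i).1 (hy i).2
  have hmxy : ∀ i, x i * y i ≤ min (x i) (y i) := fun i =>
    le_min (mul_le_of_le_one_right (hx i).1 (hy i).2)
           (mul_le_of_le_one_left (hy i).1 (hx i).2)
  have hlm0 : 0 < lminus := by rw [hlminus]; positivity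
  have hlpΔ : 1 ≤ lplus * Δ := by
    by_cases hex : ∃ i ∈ I, Δ < a i
    · obtain ⟨hi₀I, hi₀gt, _⟩ := hi₀ hex
      have hd0 : 0 < a i₀ - Δ := by linarith
      have hsd : 0 < Real.sqrt (a i₀ - Δ) := Real.sqrt_pos.2 hd0
      have hsa : 0 ≤ Real.sqrt (a i₀) := Real.sqrt_nonneg _
      rw [hlplus₁ hex, div_mul_eq_mul_div, le_div_iff₀ (by positivity)]
      nlinarith
    · rw [hlplus₂ hex]
      rw [div_mul_cancel₀ _ (ne_of_gt hΔpos)]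
  have hlmlp : lminus ≤ lplus := by
    rw [hlminus, div_le_iff₀ hΔpos]; linarith
  have hlp0 : 0 < lplus := lt_of_lt_of_le hlm0 hlmlp
  have hc0 : (0:ℝ) ≤ lplus*Δ - 1 := by linarith
  -- the key inequality about lplus
  have hKEY : ∀ b : ℝ, Δ < b → (∃ i ∈ I, Δ < a i) → a i₀ ≤ b →
      Real.sqrt b + Real.sqrt (b-Δ) ≤ lplus*Δ*Real.sqrt (b-Δ) := by
    intro b hb hex hab
    obtain ⟨hi₀I, hi₀gt, _⟩ := hi₀ hex
    have hd0 : 0 < a i₀ - Δ := by linarith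
    have hbd0 : 0 < b - Δ := by linarith
    have hd0p : 0 < Real.sqrt (a i₀ - Δ) := Real.sqrt_pos.2 hd0
    have hdbp : 0 < Real.sqrt (b - Δ) := Real.sqrt_pos.2 hbd0
    have hcross : Real.sqrt b * Real.sqrt (a i₀ - Δ) ≤ Real.sqrt (a i₀) * Real.sqrt (b - Δ) := by
      rw [← Real.sqrt_mul (by linarith : (0:ℝ) ≤ b), ← Real.sqrt_mul (by linarith : (0:ℝ) ≤ a i₀)]
      apply Real.sqrt_le_sqrt
      nlinarith
    rw [hlplus₁ hex, div_mul_eq_mul_div, div_mul_eq_mul_div,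
      le_div_iff₀ (by positivity)]
    nlinarith [mul_le_mul_of_nonneg_left hcross hΔpos.le,
      mul_pos hΔpos hdbp, mul_pos hΔpos hd0p, Real.sqrt_nonneg b, Real.sqrt_nonneg (b-Δ)]
  have hKI : ∀ i ∈ I, Δ < a i →
      Real.sqrt (a i) + Real.sqrt (a i - Δ) ≤ lplus*Δ*Real.sqrt (a i - Δ) := by
    intro i hi hgt
    exact hKEY _ hgt ⟨i, hi, hgt⟩ ((hi₀ ⟨i, hi, hgt⟩).2.2 i hi hgt)
  have hQgen : ∀ b : ℝ, Δ ≤ b →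
      (Δ < b → Real.sqrt b + Real.sqrt (b-Δ) ≤ lplus*Δ*Real.sqrt (b-Δ)) →
      Real.sqrt b/(Real.sqrt b - Real.sqrt (b-Δ)) ≤ lplus*(b-Δ) + 1 := by
    intro b hb hyp
    rcases eq_or_lt_of_le hb with heq | hlt
    · rw [← heq]
      simp only [sub_self, Real.sqrt_zero, sub_zero]
      rw [div_self (by positivity : Real.sqrt Δ ≠ 0)]
      nlinarith
    · have h2 := hyp hlt
      have hdb2 : (Real.sqrt (b-Δ))^2 = b - Δ := Real.sq_sqrt (by linarith)
      rw [cval hΔpos hb, div_le_iff₀ hΔpos]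
      nlinarith [mul_le_mul_of_nonneg_left h2 (Real.sqrt_nonneg (b-Δ))]
  have hQI : ∀ i ∈ I,
      Real.sqrt (a i)/(Real.sqrt (a i) - Real.sqrt (a i - Δ)) ≤ lplus*(a i - Δ) + 1 :=
    fun i hi => hQgen _ (hIle i hi) (hKI i hi)
  have hCap : ∀ i ∈ I,
      Real.sqrt (a i)/(Real.sqrt (a i) - Real.sqrt (a i - Δ)) ≤ lplus*(a i) := by
    intro i hi
    have := hQI i hi
    nlinarith
  -- per-index linear lower bound (S2)
  have hb2 : ∀ i ∈ I, lplus*(a i)*(x i * y i - 1)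
      ≤ Real.sqrt (a i)/(Real.sqrt (a i) - Real.sqrt (a i - Δ)) * (Real.sqrt (x i * y i) - 1) := by
    intro i hi
    exact lin_low _ _ _ (ht0 i) (ht1 i)
      (mul_nonneg hlp0.le (by linarith [hIle i hi, hΔpos])) (hCap i hi)
  -- partition of the complement
  have hcompl : Iᶜ = J0 ∪ J1 := by
    ext i
    simp only [Finset.mem_compl, Finset.mem_union]
    constructor
    · intro hiI
      have h := Finset.mem_univ i
      rw [← hpart] at h
      simp only [Finset.mem_union] at h
      tauto
    · intro hiJ hiI
      rcases hiJ with h | h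
      · exact (Finset.disjoint_left.1 hIJ0) hiI h
      · exact (Finset.disjoint_left.1 hIJ1) hiI h
  set z : Fin n → ℝ := fun i => if i ∈ J0 then a i * (x i * y i) else a i * (x i * y i - 1)
    with hzdef
  -- the lower bound on the bilinear constraint, moved to I
  have hZlb : dΛ - (∑ i ∈ Iᶜ, z i) ≤ ∑ i ∈ I, a i * (x i * y i) := by
    have hsplit : ∑ i ∈ Iᶜ, z i
        = (∑ i ∈ J0, a i * (x i * y i)) + ∑ i ∈ J1, a i * (x i * y i - 1) := by
      rw [hcompl, Finset.sum_union hJ0J1]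
      congr 1
      · exact Finset.sum_congr rfl (fun i hi => by rw [hzdef]; simp only; rw [if_pos hi])
      · refine Finset.sum_congr rfl (fun i hi => ?_)
        have hnot : i ∉ J0 := fun h => (Finset.disjoint_left.1 hJ0J1) h hi
        rw [hzdef]; simp only; rw [if_neg hnot]
    have h1 : ∑ i ∈ J1, a i * (x i * y i - 1)
        = (∑ i ∈ J1, a i * (x i * y i)) - ∑ i ∈ J1, a i := by
      rw [← Finset.sum_sub_distrib]
      exact Finset.sum_congr rfl (fun i _ => by ring)
    have htotal : (∑ i ∈ I, a i * (x i * y i)) + ∑ i ∈ Iᶜ, a i * (x i * y i)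
        = ∑ i, a i * (x i * y i) := Finset.sum_add_sum_compl I _
    have hIc : ∑ i ∈ Iᶜ, a i * (x i * y i)
        = (∑ i ∈ J0, a i * (x i * y i)) + ∑ i ∈ J1, a i * (x i * y i) := by
      rw [hcompl, Finset.sum_union hJ0J1]
    rw [hsplit, h1, hdΛ]
    linarith [hxy]
  set S : ℝ := ∑ i ∈ I, a i * (x i * y i) with hSdef
  set A : ℝ := ∑ i ∈ I, a i with hAdef
  have hdA : dΛ = A - Δ := by rw [hΔ]; ring
  -- sum of the linear bounds
  have hdiv : ∀ u : ℝ, u/Δ = lminus*u := fun u => by rw [hlminus]; ring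
  have hlmΔ : lminus * Δ = 1 := by rw [hlminus]; field_simp
  have hsum2 : ∑ i ∈ I, lplus*(a i)*(x i * y i - 1) = lplus*S - lplus*A := by
    rw [Finset.sum_congr rfl
      (fun i (_ : i ∈ I) => (by ring :
        lplus*(a i)*(x i * y i - 1) = lplus*(a i*(x i * y i)) - lplus*(a i))),
      Finset.sum_sub_distrib, ← Finset.mul_sum, ← Finset.mul_sum, ← hSdef, ← hAdef]
  have hb2sum : lplus*S - lplus*A
      ≤ ∑ i ∈ I, Real.sqrt (a i)/(Real.sqrt (a i) - Real.sqrt (a i - Δ))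
          * (Real.sqrt (x i * y i) - 1) := by
    rw [← hsum2]
    exact Finset.sum_le_sum hb2
  -- MASTER INEQUALITY
  have hM : -1 - stmt7psi lminus lplus (lplus*Δ - 1) (dΛ - S)
      ≤ ∑ i ∈ I, Real.sqrt (a i)/(Real.sqrt (a i) - Real.sqrt (a i - Δ))
          * (Real.sqrt (x i * y i) - 1) := by
    have hchordsum : (∀ i ∈ I, a i - Δ ≤ a i * (x i * y i)) →
        (S - A)/Δ ≤ ∑ i ∈ I, Real.sqrt (a i)/(Real.sqrt (a i) - Real.sqrt (a i - Δ))
          * (Real.sqrt (x i * y i) - 1) := by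
      intro hper
      have h7 : ∑ i ∈ I, (a i * (x i * y i) - a i)/Δ = (S - A)/Δ := by
        rw [hSdef, hAdef, ← Finset.sum_sub_distrib, Finset.sum_div]
      rw [← h7]
      exact Finset.sum_le_sum (fun i hi =>
        chord hΔpos (hIle i hi) (hper i hi) (ht0 i) (ht1 i))
    rcases le_or_gt (dΛ - S) 0 with hZ | hZ
    · -- every coordinate is in the high region
      have hper : ∀ i ∈ I, a i - Δ ≤ a i * (x i * y i) := by
        intro i hi
        have h4 : ∑ k ∈ I.erase i, a k * (x k * y k) ≤ ∑ k ∈ I.erase i, a k :=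
          Finset.sum_le_sum (fun k hk => by
            have hkI : k ∈ I := Finset.mem_of_mem_erase hk
            nlinarith [hpos k hkI, ht1 k, ht0 k])
        have h5 : a i * (x i * y i) + ∑ k ∈ I.erase i, a k * (x k * y k) = S := by
          rw [hSdef]; exact Finset.add_sum_erase I (fun k => a k * (x k * y k)) hi
        have h6 : a i + ∑ k ∈ I.erase i, a k = A := by
          rw [hAdef]; exact Finset.add_sum_erase I a hi
        have hSd : dΛ ≤ S := by linarith
        rw [hdA] at hSd
        linarith
      have hch := hchordsum hper
      rw [hdiv] at hch
      have hgemin := stmt7psi_min_le (lm := lminus) (lp := lplus)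
        (c := lplus*Δ - 1) (z := dΛ - S) hlmlp
      rcases min_cases (lminus*(dΛ - S)) (lplus*(dΛ - S) + (lplus*Δ - 1)) with ⟨he, _⟩ | ⟨he, _⟩ <;>
        rw [he] at hgemin
      · have e2 : lminus*(dΛ - S) = -1 - lminus*(S - A) := by
          rw [hdA]; linear_combination (-1 : ℝ)*hlmΔ
        linarith
      · have e3 : lplus*(dΛ - S) + (lplus*Δ - 1) = -1 - (lplus*S - lplus*A) := by
          rw [hdA]; ring
        linarith [hb2sum]
    · -- dΛ - S > 0
      rw [stmt7psi_of_nonneg hZ.le]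
      by_cases hexlow : ∃ j ∈ I, a j * (x j * y j) ≤ a j - Δ
      · obtain ⟨j, hjI, hjlow⟩ := hexlow
        have hbound : ∀ i ∈ I,
            lplus*(a i)*(x i * y i - 1) + (if i = j then lplus*Δ - 1 else 0)
            ≤ Real.sqrt (a i)/(Real.sqrt (a i) - Real.sqrt (a i - Δ))
                * (Real.sqrt (x i * y i) - 1) := by
          intro i hi
          by_cases hij : i = j
          · subst hij
            rw [if_pos rfl]
            exact low_bound hΔpos (hIle i hi) (ht0 i) hjlow (hKI i hi)
          · rw [if_neg hij, add_zero]
            exact hb2 i hi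
        have hS2 := Finset.sum_le_sum hbound
        rw [Finset.sum_add_distrib, hsum2, Finset.sum_ite_eq' I j (fun _ => lplus*Δ - 1),
          if_pos hjI] at hS2
        have e1 : lplus*(dΛ - S) = lplus*A - lplus*Δ - lplus*S := by
          rw [hdA]; ring
        linarith
      · push_neg at hexlow
        have hch := hchordsum (fun i hi => (hexlow i hi).le)
        rw [hdiv] at hch
        have e2 : lminus*(S - A) = -1 - lminus*(dΛ - S) := by
          rw [hdA]; linear_combination (-1 : ℝ)*hlmΔ
        have hmul : 0 ≤ (lplus - lminus)*(dΛ - S) := mul_nonneg (by linarith) hZ.le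
        have e4 : -1 - lplus*(dΛ - S)
            = -1 - lminus*(dΛ - S) - (lplus - lminus)*(dΛ - S) := by ring
        linarith
  have hxyprod : ∀ i, x i + y i - 1 ≤ x i * y i := fun i => by
    nlinarith [mul_nonneg (sub_nonneg.2 (hx i).2) (sub_nonneg.2 (hy i).2)]
  have h2xy : ∀ i, 1 - x i * y i ≤ min (2 - x i - y i) 1 := fun i =>
    le_min (by linarith [hxyprod i]) (by nlinarith [ht0 i])
  -- per-index bound on the lifting functions
  have hγlb : ∀ i ∈ Iᶜ, stmt7psi lminus lplus (lplus*Δ - 1) (z i) ≤ γ i (x i) (y i) := by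
    intro i hic
    have hiI : i ∉ I := Finset.mem_compl.1 hic
    have hiJ : i ∈ J0 ∪ J1 := by rw [← hcompl]; exact hic
    rcases Finset.mem_union.1 hiJ with hiJ0 | hiJ1
    · -- i ∈ J0
      have hzi : z i = a i * (x i * y i) := by rw [hzdef]; simp only; rw [if_pos hiJ0]
      rcases lt_or_gt_of_ne (hanz i hiI) with hneg | hposa
      · -- a i < 0
        rw [hγ₃ i hiJ0 hneg (x i) (y i), hzi]
        have hz0 : a i * (x i * y i) ≤ 0 :=
          mul_nonpos_iff.2 (Or.inr ⟨hneg.le, ht0 i⟩)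
        have hlmB := stmt7psi_le_lm (lm := lminus) (lp := lplus)
          (c := lplus*Δ-1) hz0
        have hlpB := stmt7psi_le_lp (lm := lminus) (lp := lplus)
          (z := a i * (x i * y i)) hc0
        have hle : a i * (x i * y i) ≤ a i * (x i + y i - 1) :=
          mul_le_mul_of_nonpos_left (hxyprod i) hneg.le
        refine le_min (le_min ?_ ?_) ?_
        · have := mul_le_mul_of_nonneg_left hle hlm0.le
          linarith
        · have := mul_le_mul_of_nonneg_left hle hlp0.le
          linarith
        · have : lminus * (a i * (x i * y i)) ≤ 0 :=
            mul_nonpos_iff.2 (Or.inl ⟨hlm0.le, hz0⟩)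
          linarith
      · -- a i > 0
        rw [hγ₁ i hiJ0 hposa (x i) (y i), hzi]
        have hz0 : 0 ≤ a i * (x i * y i) := mul_nonneg hposa.le (ht0 i)
        rw [stmt7psi_of_nonneg hz0]
        have := mul_le_mul_of_nonneg_left (hmxy i) (mul_nonneg hlp0.le hposa.le)
        linarith
    · -- i ∈ J1
      have hnot0 : i ∉ J0 := fun h => (Finset.disjoint_left.1 hJ0J1) h hiJ1
      have hzi : z i = a i * (x i * y i - 1) := by rw [hzdef]; simp only; rw [if_neg hnot0]
      rcases lt_or_gt_of_ne (hanz i hiI) with hneg | hposa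
      · -- a i < 0
        rw [hγ₂ i hiJ1 hneg (x i) (y i), hzi]
        have hz0 : 0 ≤ a i * (x i * y i - 1) :=
          mul_nonneg_iff.2 (Or.inr ⟨hneg.le, by linarith [ht1 i]⟩)
        rw [stmt7psi_of_nonneg hz0]
        have h3 := mul_le_mul_of_nonneg_left (h2xy i)
          (mul_nonneg hlp0.le (neg_nonneg.2 hneg.le))
        linarith
      · -- a i > 0
        have hz0 : a i * (x i * y i - 1) ≤ 0 :=
          mul_nonpos_iff.2 (Or.inl ⟨hposa.le, by linarith [ht1 i]⟩)
        have hlmB := stmt7psi_le_lm (lm := lminus) (lp := lplus)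
          (c := lplus*Δ-1) hz0
        have hlpB := stmt7psi_le_lp (lm := lminus) (lp := lplus)
          (z := a i * (x i * y i - 1)) hc0
        have hminle : a i * (x i * y i - 1) ≤ a i * (min (x i) (y i) - 1) :=
          mul_le_mul_of_nonneg_left (by linarith [hmxy i]) hposa.le
        have hgt : stmt7psi lminus lplus (lplus*Δ-1) (z i)
            ≤ lplus * a i * (min (x i) (y i) - 1) + lplus * Δ - 1 := by
          rw [hzi]
          have := mul_le_mul_of_nonneg_left hminle hlp0.le
          linarith
        have hht : stmt7psi lminus lplus (lplus*Δ-1) (z i)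
            ≤ lminus * a i * (min (x i) (y i) - 1) := by
          rw [hzi]
          have := mul_le_mul_of_nonneg_left hminle hlm0.le
          linarith
        by_cases hex : ∃ j ∈ I, Δ < a j
        · by_cases hge : a i₀ ≤ a i
          · rw [hγ₄ i hiJ1 hposa hex hge (x i) (y i)]
            have hΔlt : Δ < a i := lt_of_lt_of_le (hi₀ hex).2.1 hge
            have hK := hKEY (a i) hΔlt hex hge
            refine le_min (le_min hgt hht) (le_min ?_ ?_)
            · rcases le_or_gt (a i * (x i * y i)) (a i - Δ) with hl | hh
              · have hg := g_low hΔpos hΔlt.le (ht0 i) hl hlp0.le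
                rw [hzi]
                linarith [hlpB]
              · have hg := g_high hΔpos hΔlt (ht1 i) hh.le (ht0 i) hK
                have e : lminus * (a i * (x i * y i - 1))
                    = (a i * (x i * y i) - a i)/Δ := by rw [hdiv]; ring
                rw [hzi]
                linarith [hlmB]
            · rcases le_or_gt (a i * (x i * y i)) (a i - Δ) with hl | hh
              · have hg := low_bound hΔpos hΔlt.le (ht0 i) hl (fun _ => hK)
                rw [hzi]
                linarith [hlpB]
              · have hg := chord hΔpos hΔlt.le hh.le (ht0 i) (ht1 i)
                have e : lminus * (a i * (x i * y i - 1))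
                    = (a i * (x i * y i) - a i)/Δ := by rw [hdiv]; ring
                rw [hzi]
                linarith [hlmB]
          · push_neg at hge
            rw [hγ₅ i hiJ1 hposa (Or.inr hge) (x i) (y i)]
            exact le_min hgt hht
        · rw [hγ₅ i hiJ1 hposa (Or.inl hex) (x i) (y i)]
          exact le_min hgt hht
  -- final assembly
  have hpsisum := stmt7psi_sum hlm0 hlmlp hc0 Iᶜ z
  have hpsimono := stmt7psi_mono hlm0 hlmlp hc0
    (show dΛ - S ≤ ∑ i ∈ Iᶜ, z i by linarith [hZlb])
  have hγsum := Finset.sum_le_sum hγlb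
  linarith [hM, hpsisum, hpsimono, hγsum]
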